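/- Let m ≥ 2 be an integer. For every t ∈ {0,…,m}, the number of permutations σ of {1,…,2m} such that |σ(i) − i| ≤ m for all i ∈ {1,…,2m} and exactly t indices j ∈ {m+1,…,2m} satisfy σ(j) ≤ m is equal to ((m−t)! · S(m+1, m−t+1))². -/

import Mathlib

/-- Stirling numbers of the second kind: `stirling n k` is the number of
partitions of an `n`-element set into `k` nonempty blocks. It satisfies
`stirling 0 0 = 1`, `stirling n 0 = 0` for `n ≥ 1`, and
`stirling (n+1) k = k * stirling n k + stirling n (k-1)`. -/
def stirling : ℕ → ℕ → ℕ
  | 0, 0 => 1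
  | 0, _ + 1 => 0
  | _ + 1, 0 => 0
  | n + 1, k + 1 => (k + 1) * stirling n (k + 1) + stirling n k

lemma stirling_zero_right : ∀ n, stirling (n+1) 0 = 0 := fun _ => rfl

lemma stirling_of_lt : ∀ n k, n < k → stirling n k = 0
  | 0, k+1, _ => rfl
  | n+1, k+1, h => by
      rw [stirling, stirling_of_lt n (k+1) (by omega), stirling_of_lt n k (by omega)]
      ring

lemma stirling_self : ∀ n, stirling n n = 1
  | 0 => rfl
  | n+1 => by
      rw [stirling, stirling_of_lt n (n+1) (by omega), stirling_self n]
      ring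

def IsRook (n t : ℕ) (R : Finset (ℕ × ℕ)) : Prop :=
  R.card = t ∧ (∀ x ∈ R, x.1 < x.2 ∧ x.2 < n) ∧
  (∀ x ∈ R, ∀ y ∈ R, x.1 = y.1 → x = y) ∧
  (∀ x ∈ R, ∀ y ∈ R, x.2 = y.2 → x = y)

instance IsRook.dec (n t : ℕ) : DecidablePred (IsRook n t) := fun R => by
  unfold IsRook; infer_instance

def RookF (n t : ℕ) : Finset (Finset (ℕ × ℕ)) :=
  ((Finset.range n ×ˢ Finset.range n).powerset).filter (IsRook n t)

lemma mem_RookF {n t : ℕ} {R : Finset (ℕ × ℕ)} : R ∈ RookF n t ↔ IsRook n t R := by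
  simp only [RookF, Finset.mem_filter, Finset.mem_powerset, and_iff_right_iff_imp]
  intro h
  intro x hx
  have := h.2.1 x hx
  simp only [Finset.mem_product, Finset.mem_range]
  omega

lemma RookF_zero (n : ℕ) : RookF n 0 = {∅} := by
  ext R
  simp only [mem_RookF, IsRook, Finset.mem_singleton, Finset.card_eq_zero]
  constructor
  · rintro ⟨h, -⟩; exact h
  · rintro rfl; simp

lemma rook_card : ∀ n t, (RookF (n+1) t).card = stirling (n+1) (n+1-t) := by
  intro n
  induction n with
  | zero =>
    intro t
    match t with
    | 0 => rw [RookF_zero]; simp [stirling]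
    | t+1 =>
      rw [show (1 - (t+1)) = 0 from by omega, stirling_zero_right]
      rw [Finset.card_eq_zero]
      ext R
      simp only [mem_RookF, IsRook, Finset.notMem_empty, iff_false, not_and]
      intro hcard hb
      exfalso
      have : R.Nonempty := by rw [← Finset.card_pos, hcard]; omega
      obtain ⟨x, hx⟩ := this
      have := hb x hx
      omega
  | succ n ih =>
    intro t
    match t with
    | 0 => rw [RookF_zero]; simp [Finset.card_singleton, stirling_self]
    | s+1 =>
      -- split by whether some rook is in column n+1
      have hsplit : RookF (n+2) (s+1) =
          (RookF (n+2) (s+1)).filter (fun R => ∀ x ∈ R, x.2 ≠ n+1) ∪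
          (RookF (n+2) (s+1)).filter (fun R => ∃ x ∈ R, x.2 = n+1) := by
        rw [← Finset.filter_or]
        rw [Finset.filter_true_of_mem]
        intro R _
        by_cases h : ∃ x ∈ R, x.2 = n+1
        · exact Or.inr h
        · exact Or.inl (by push_neg at h; exact h)
      have hdisj : Disjoint ((RookF (n+2) (s+1)).filter (fun R => ∀ x ∈ R, x.2 ≠ n+1))
          ((RookF (n+2) (s+1)).filter (fun R => ∃ x ∈ R, x.2 = n+1)) := by
        rw [Finset.disjoint_left]
        intro R h1 h2
        simp only [Finset.mem_filter] at h1 h2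
        obtain ⟨x, hx, hx2⟩ := h2.2
        exact h1.2 x hx hx2
      have hA : (RookF (n+2) (s+1)).filter (fun R => ∀ x ∈ R, x.2 ≠ n+1)
          = RookF (n+1) (s+1) := by
        ext R
        simp only [Finset.mem_filter, mem_RookF, IsRook]
        constructor
        · rintro ⟨⟨hc, hb, h1, h2⟩, hcol⟩
          refine ⟨hc, fun x hx => ?_, h1, h2⟩
          have := hb x hx
          have := hcol x hx
          omega
        · rintro ⟨hc, hb, h1, h2⟩
          refine ⟨⟨hc, fun x hx => ?_, h1, h2⟩, fun x hx => ?_⟩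
          · have := hb x hx; omega
          · have := hb x hx; omega
      have hBsum : ((RookF (n+2) (s+1)).filter (fun R => ∃ x ∈ R, x.2 = n+1)).card
          = ((RookF (n+1) s).sigma (fun R' => Finset.range (n+1) \ R'.image Prod.fst)).card := by
        symm
        apply Finset.card_bij (fun a _ => insert (a.2, n+1) a.1)
        · -- maps into
          rintro ⟨R', i⟩ ha
          simp only [Finset.mem_sigma, Finset.mem_sdiff, Finset.mem_range, mem_RookF,
            Finset.mem_image, not_exists, not_and] at ha
          obtain ⟨⟨hc, hb, h1, h2⟩, hi, hni⟩ := ha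
          have hnotmem : (i, n+1) ∉ R' := by
            intro h
            have := hb _ h
            omega
          simp only [Finset.mem_filter, mem_RookF, IsRook]
          refine ⟨⟨?_, ?_, ?_, ?_⟩, ⟨(i, n+1), Finset.mem_insert_self _ _, rfl⟩⟩
          · rw [Finset.card_insert_of_notMem hnotmem, hc]
          · intro x hx
            rcases Finset.mem_insert.mp hx with rfl | hx
            · simp; omega
            · have := hb x hx; omega
          · intro x hx y hy hxy
            rcases Finset.mem_insert.mp hx with rfl | hx <;>
              rcases Finset.mem_insert.mp hy with rfl | hy
            · rfl
            · exact absurd hxy.symm (hni y hy)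
            · exact absurd hxy (hni x hx)
            · exact h1 x hx y hy hxy
          · intro x hx y hy hxy
            rcases Finset.mem_insert.mp hx with rfl | hx <;>
              rcases Finset.mem_insert.mp hy with rfl | hy
            · rfl
            · have := hb y hy; omega
            · have := hb x hx; omega
            · exact h2 x hx y hy hxy
        · -- injective
          rintro ⟨R', i⟩ ha ⟨R'', i'⟩ ha' heq
          simp only [Finset.mem_sigma, Finset.mem_sdiff, Finset.mem_range, mem_RookF] at ha ha'
          obtain ⟨⟨hc, hb, h1, h2⟩, -⟩ := ha
          obtain ⟨⟨hc', hb', h1', h2'⟩, -⟩ := ha'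
          have hnm : (i, n+1) ∉ R' := fun h => by have := hb _ h; omega
          have hnm' : (i', n+1) ∉ R'' := fun h => by have := hb' _ h; omega
          have hii : i = i' := by
            have : (i, n+1) ∈ insert (i', n+1) R'' := heq ▸ Finset.mem_insert_self _ _
            rcases Finset.mem_insert.mp this with h | h
            · exact (Prod.mk.injEq .. ▸ h).1
            · exact absurd h (fun h => by have := hb' _ h; omega)
          subst hii
          have : R' = R'' := by
            have := congrArg (fun S => Finset.erase S (i, n+1)) heq
            simpa [Finset.erase_insert hnm, Finset.erase_insert hnm'] using this
          simp [this]
        · -- surjective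
          intro R hR
          simp only [Finset.mem_filter, mem_RookF, IsRook] at hR
          obtain ⟨⟨hc, hb, h1, h2⟩, x, hx, hx2⟩ := hR
          refine ⟨⟨R.erase x, x.1⟩, ?_, ?_⟩
          · simp only [Finset.mem_sigma, Finset.mem_sdiff, Finset.mem_range, mem_RookF, IsRook]
            refine ⟨⟨?_, ?_, ?_, ?_⟩, ?_, ?_⟩
            · rw [Finset.card_erase_of_mem hx, hc]
              omega
            · intro y hy
              have hy' := Finset.mem_of_mem_erase hy
              have hne := Finset.ne_of_mem_erase hy
              have := hb y hy'
              have : y.2 ≠ n+1 := fun h => hne (h2 y hy' x hx (h.trans hx2.symm))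
              omega
            · intro a ha b hb'' hab
              exact h1 a (Finset.mem_of_mem_erase ha) b (Finset.mem_of_mem_erase hb'') hab
            · intro a ha b hb'' hab
              exact h2 a (Finset.mem_of_mem_erase ha) b (Finset.mem_of_mem_erase hb'') hab
            · have := hb x hx; omega
            · simp only [Finset.mem_image, not_exists]
              rintro y hy
              obtain ⟨hy, h⟩ := hy
              have hy' := Finset.mem_of_mem_erase hy
              have := h1 y hy' x hx h
              exact Finset.ne_of_mem_erase hy this
          · have : x = (x.1, n+1) := by
              rw [Prod.ext_iff]; exact ⟨rfl, hx2⟩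
            rw [← this, Finset.insert_erase hx]
      have hB : ((RookF (n+2) (s+1)).filter (fun R => ∃ x ∈ R, x.2 = n+1)).card
          = (RookF (n+1) s).card * (n+1-s) := by
        rw [hBsum, Finset.card_sigma]
        apply Finset.sum_const_nat
        intro R' hR'
        rw [mem_RookF] at hR'
        obtain ⟨hc, hb, h1, h2⟩ := hR'
        rw [Finset.card_sdiff_of_subset]
        · rw [Finset.card_image_of_injOn (fun x hx y hy hxy => h1 x hx y hy hxy), hc,
            Finset.card_range]
        · intro a ha
          simp only [Finset.mem_image] at ha
          obtain ⟨x, hx, rfl⟩ := ha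
          have := hb x hx
          simp only [Finset.mem_range]
          omega
      have := Finset.card_union_of_disjoint hdisj
      rw [← hsplit] at this
      rw [show n+1+1 = n+2 from rfl, this, hA, hB, ih (s+1), ih s]
      rcases Nat.lt_or_ge n s with h | h
      · have e1 : n + 1 - (s+1) = 0 := by omega
        have e2 : n + 1 - s = 0 ∨ (n + 1 - s = 1 ∧ s = n) := by omega
        rcases e2 with e2 | ⟨e2, rfl⟩
        · rw [e1, e2]
          simp [stirling_zero_right, show n+2-(s+1) = 0 from by omega]
        · omega
      · have e1 : n + 1 - (s+1) = n - s := by omega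
        have e2 : n + 1 - s = (n - s) + 1 := by omega
        have e3 : n + 2 - (s+1) = (n - s) + 1 := by omega
        rw [e1, e2, e3]
        conv_rhs => rw [stirling]
        ring

open Finset

section Main

variable {m : ℕ}

/-- positions in the first half whose successor-label is not a column of `R`. -/
def fhf (m : ℕ) (R : Finset (ℕ × ℕ)) : Finset (Fin (2*m)) :=
  univ.filter (fun x => (x:ℕ) < m ∧ (x:ℕ)+1 ∉ R.image Prod.snd)

/-- positions in the second half whose shifted label is not a row of `R`. -/
def shf (m : ℕ) (R : Finset (ℕ × ℕ)) : Finset (Fin (2*m)) :=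
  univ.filter (fun x => m ≤ (x:ℕ) ∧ (x:ℕ)-m ∉ R.image Prod.fst)

lemma card_filter_lt (m : ℕ) : (univ.filter (fun x : Fin (2*m) => (x:ℕ) < m)).card = m := by
  conv_rhs => rw [← Finset.card_range m]
  apply Finset.card_bij (s := univ.filter (fun x : Fin (2*m) => (x:ℕ) < m)) (t := Finset.range m) (fun x _ => (x : ℕ))
  · intro x hx
    simp only [mem_filter] at hx
    simpa using hx.2
  · intro x hx y hy h
    exact Fin.val_injective h
  · intro n hn
    simp only [Finset.mem_range] at hn
    exact ⟨⟨n, by omega⟩, by simp [hn], rfl⟩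

lemma card_filter_ge (m : ℕ) : (univ.filter (fun x : Fin (2*m) => m ≤ (x:ℕ))).card = m := by
  have h := Finset.card_filter_add_card_filter_not
    (s := (univ : Finset (Fin (2*m)))) (p := fun x => (x:ℕ) < m)
  rw [card_filter_lt, Finset.card_univ, Fintype.card_fin] at h
  have : (univ.filter (fun x : Fin (2*m) => ¬ (x:ℕ) < m))
      = (univ.filter (fun x : Fin (2*m) => m ≤ (x:ℕ))) := by
    apply Finset.filter_congr
    intro x _
    simp [not_lt]
  rw [this] at h
  omega

lemma card_fhf {t : ℕ} (R : Finset (ℕ × ℕ)) (hR : R ∈ RookF (m+1) t) (hm : 1 ≤ m) :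
    (fhf m R).card = m - t := by
  obtain ⟨hc, hb, h1, h2⟩ := mem_RookF.mp hR
  have hused : ((univ.filter (fun x : Fin (2*m) => (x:ℕ) < m)).filter
      (fun x : Fin (2*m) => (x:ℕ)+1 ∈ R.image Prod.snd)).card = t := by
    rw [← hc]
    symm
    apply Finset.card_bij (fun a _ => (⟨a.2 - 1, by have := hb a ‹_›; omega⟩ : Fin (2*m)))
    · intro a ha
      have hba := hb a ha
      simp only [mem_filter, mem_univ, true_and, Finset.mem_image]
      exact ⟨by omega, a, ha, by omega⟩
    · intro a ha b hbb h
      have := hb a ha; have := hb b hbb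
      have : a.2 = b.2 := by
        have := congrArg Fin.val h
        simp only at this
        omega
      exact h2 a ha b hbb this
    · intro x hx
      simp only [mem_filter, mem_univ, true_and, Finset.mem_image] at hx
      obtain ⟨hxm, a, ha, ha2⟩ := hx
      exact ⟨a, ha, by apply Fin.val_injective; simp; omega⟩
  have hsplit := Finset.card_filter_add_card_filter_not
    (s := univ.filter (fun x : Fin (2*m) => (x:ℕ) < m))
    (p := fun x : Fin (2*m) => (x:ℕ)+1 ∈ R.image Prod.snd)
  rw [card_filter_lt, hused] at hsplit
  have : fhf m R = (univ.filter (fun x : Fin (2*m) => (x:ℕ) < m)).filter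
      (fun x : Fin (2*m) => ¬ ((x:ℕ)+1 ∈ R.image Prod.snd)) := by
    rw [Finset.filter_filter]
    rfl
  rw [this]
  omega

lemma card_shf {t : ℕ} (R : Finset (ℕ × ℕ)) (hR : R ∈ RookF (m+1) t) (hm : 1 ≤ m) :
    (shf m R).card = m - t := by
  obtain ⟨hc, hb, h1, h2⟩ := mem_RookF.mp hR
  have hused : ((univ.filter (fun x : Fin (2*m) => m ≤ (x:ℕ))).filter
      (fun x : Fin (2*m) => (x:ℕ)-m ∈ R.image Prod.fst)).card = t := by
    rw [← hc]
    symm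
    apply Finset.card_bij (fun a _ => (⟨m + a.1, by have := hb a ‹_›; omega⟩ : Fin (2*m)))
    · intro a ha
      have hba := hb a ha
      simp only [mem_filter, mem_univ, true_and, Finset.mem_image]
      exact ⟨by omega, a, ha, by omega⟩
    · intro a ha b hbb h
      have := hb a ha; have := hb b hbb
      have : a.1 = b.1 := by
        have := congrArg Fin.val h
        simp only at this
        omega
      exact h1 a ha b hbb this
    · intro x hx
      simp only [mem_filter, mem_univ, true_and, Finset.mem_image] at hx
      obtain ⟨hxm, a, ha, ha2⟩ := hx
      have := hb a ha
      exact ⟨a, ha, by apply Fin.val_injective; simp; omega⟩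
  have hsplit := Finset.card_filter_add_card_filter_not
    (s := univ.filter (fun x : Fin (2*m) => m ≤ (x:ℕ)))
    (p := fun x : Fin (2*m) => (x:ℕ)-m ∈ R.image Prod.fst)
  rw [card_filter_ge, hused] at hsplit
  have : shf m R = (univ.filter (fun x : Fin (2*m) => m ≤ (x:ℕ))).filter
      (fun x : Fin (2*m) => ¬ ((x:ℕ)-m ∈ R.image Prod.fst)) := by
    rw [Finset.filter_filter]
    rfl
  rw [this]
  omega

end Main

section Main2

variable {m : ℕ}

def dpairs (m : ℕ) (σ : Equiv.Perm (Fin (2*m))) : Finset (ℕ × ℕ) :=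
  (univ.filter (fun j : Fin (2*m) => m ≤ (j:ℕ) ∧ (σ j : ℕ) < m)).image
    (fun j : Fin (2*m) => ((j:ℕ) - m, (σ j : ℕ) + 1))

def upairs (m : ℕ) (σ : Equiv.Perm (Fin (2*m))) : Finset (ℕ × ℕ) :=
  (univ.filter (fun i : Fin (2*m) => (i:ℕ) < m ∧ m ≤ (σ i : ℕ))).image
    (fun i : Fin (2*m) => ((σ i : ℕ) - m, (i:ℕ) + 1))

lemma card_dpairs (σ : Equiv.Perm (Fin (2*m))) :
    (dpairs m σ).card = (univ.filter (fun j : Fin (2*m) => m ≤ (j:ℕ) ∧ (σ j : ℕ) < m)).card := by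
  apply Finset.card_image_of_injOn
  intro x hx y hy h
  simp only [Finset.coe_filter, Set.mem_setOf_eq, mem_univ, true_and] at hx hy
  have := (Prod.mk.injEq _ _ _ _ ▸ h).1
  apply Fin.val_injective
  omega

lemma card_upairs (σ : Equiv.Perm (Fin (2*m))) :
    (upairs m σ).card = (univ.filter (fun i : Fin (2*m) => (i:ℕ) < m ∧ m ≤ (σ i : ℕ))).card := by
  apply Finset.card_image_of_injOn
  intro x hx y hy h
  simp only [Finset.coe_filter, Set.mem_setOf_eq, mem_univ, true_and] at hx hy
  have := (Prod.mk.injEq _ _ _ _ ▸ h).2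
  apply Fin.val_injective
  omega

lemma balance (σ : Equiv.Perm (Fin (2*m))) :
    (univ.filter (fun i : Fin (2*m) => (i:ℕ) < m ∧ m ≤ (σ i : ℕ))).card
      = (univ.filter (fun j : Fin (2*m) => m ≤ (j:ℕ) ∧ (σ j : ℕ) < m)).card := by
  -- both are m minus the number of x with x < m and σ x < m
  have hS : (univ.filter (fun x : Fin (2*m) => (σ x : ℕ) < m)).card = m := by
    have himg : (univ.filter (fun x : Fin (2*m) => (σ x : ℕ) < m)).image σ
        = univ.filter (fun x : Fin (2*m) => (x:ℕ) < m) := by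
      ext y
      simp only [Finset.mem_image, mem_filter, mem_univ, true_and]
      constructor
      · rintro ⟨x, hx, rfl⟩; exact hx
      · intro hy; exact ⟨σ.symm y, by simpa using hy, by simp⟩
    have := Finset.card_image_of_injOn
      (s := univ.filter (fun x : Fin (2*m) => (σ x : ℕ) < m))
      (f := σ) (fun a _ b _ h => σ.injective h)
    rw [himg, card_filter_lt] at this
    omega
  have e1 : (univ.filter (fun x : Fin (2*m) => (σ x : ℕ) < m)).filter
      (fun x : Fin (2*m) => m ≤ (x:ℕ)) =
      univ.filter (fun j : Fin (2*m) => m ≤ (j:ℕ) ∧ (σ j : ℕ) < m) := by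
    rw [Finset.filter_filter]
    apply Finset.filter_congr
    intro x _
    tauto
  have e2 : (univ.filter (fun x : Fin (2*m) => (σ x : ℕ) < m)).filter
      (fun x : Fin (2*m) => ¬ m ≤ (x:ℕ)) =
      univ.filter (fun x : Fin (2*m) => (x:ℕ) < m ∧ (σ x : ℕ) < m) := by
    rw [Finset.filter_filter]
    apply Finset.filter_congr
    intro x _
    constructor
    · rintro ⟨h1, h2⟩; exact ⟨by omega, h1⟩
    · rintro ⟨h1, h2⟩; exact ⟨h2, by omega⟩
  have h3 := Finset.card_filter_add_card_filter_not
    (s := univ.filter (fun x : Fin (2*m) => (σ x : ℕ) < m))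
    (p := fun x : Fin (2*m) => m ≤ (x:ℕ))
  rw [e1, e2, hS] at h3
  have e3 : (univ.filter (fun x : Fin (2*m) => (x:ℕ) < m)).filter
      (fun x : Fin (2*m) => m ≤ (σ x : ℕ)) =
      univ.filter (fun x : Fin (2*m) => (x:ℕ) < m ∧ m ≤ (σ x : ℕ)) := by
    rw [Finset.filter_filter]
  have e4 : (univ.filter (fun x : Fin (2*m) => (x:ℕ) < m)).filter
      (fun x : Fin (2*m) => ¬ m ≤ (σ x : ℕ)) =
      univ.filter (fun x : Fin (2*m) => (x:ℕ) < m ∧ (σ x : ℕ) < m) := by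
    rw [Finset.filter_filter]
    apply Finset.filter_congr
    intro x _
    constructor
    · rintro ⟨h1, h2⟩; exact ⟨h1, by omega⟩
    · rintro ⟨h1, h2⟩; exact ⟨h1, by omega⟩
  have h4 := Finset.card_filter_add_card_filter_not
    (s := univ.filter (fun x : Fin (2*m) => (x:ℕ) < m))
    (p := fun x : Fin (2*m) => m ≤ (σ x : ℕ))
  rw [e3, e4, card_filter_lt] at h4
  omega

end Main2

section Main3

variable {m t : ℕ}

lemma dpairs_mem (σ : Equiv.Perm (Fin (2*m)))
    (hσ : ∀ i : Fin (2*m), |((i : ℕ) : ℤ) - ((σ i : ℕ) : ℤ)| ≤ (m : ℤ))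
    (hcard : (univ.filter (fun j : Fin (2*m) => m ≤ (j:ℕ) ∧ (σ j : ℕ) < m)).card = t) :
    dpairs m σ ∈ RookF (m+1) t := by
  rw [mem_RookF]
  refine ⟨by rw [card_dpairs, hcard], ?_, ?_, ?_⟩
  · rintro x hx
    simp only [dpairs, Finset.mem_image, mem_filter, mem_univ, true_and] at hx
    obtain ⟨j, ⟨hj1, hj2⟩, rfl⟩ := hx
    have h := abs_le.mp (hσ j)
    constructor
    · simp only
      omega
    · simp only
      omega
  · rintro x hx y hy hxy
    simp only [dpairs, Finset.mem_image, mem_filter, mem_univ, true_and] at hx hy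
    obtain ⟨j, ⟨hj1, hj2⟩, rfl⟩ := hx
    obtain ⟨j', ⟨hj1', hj2'⟩, rfl⟩ := hy
    simp only at hxy
    have : j = j' := by apply Fin.val_injective; omega
    subst this
    rfl
  · rintro x hx y hy hxy
    simp only [dpairs, Finset.mem_image, mem_filter, mem_univ, true_and] at hx hy
    obtain ⟨j, ⟨hj1, hj2⟩, rfl⟩ := hx
    obtain ⟨j', ⟨hj1', hj2'⟩, rfl⟩ := hy
    simp only at hxy
    have : σ j = σ j' := by apply Fin.val_injective; omega
    have : j = j' := σ.injective this
    subst this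
    rfl

lemma upairs_mem (σ : Equiv.Perm (Fin (2*m)))
    (hσ : ∀ i : Fin (2*m), |((i : ℕ) : ℤ) - ((σ i : ℕ) : ℤ)| ≤ (m : ℤ))
    (hcard : (univ.filter (fun j : Fin (2*m) => m ≤ (j:ℕ) ∧ (σ j : ℕ) < m)).card = t) :
    upairs m σ ∈ RookF (m+1) t := by
  rw [mem_RookF]
  have hucard : (univ.filter (fun i : Fin (2*m) => (i:ℕ) < m ∧ m ≤ (σ i : ℕ))).card = t := by
    rw [balance, hcard]
  refine ⟨by rw [card_upairs, hucard], ?_, ?_, ?_⟩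
  · rintro x hx
    simp only [upairs, Finset.mem_image, mem_filter, mem_univ, true_and] at hx
    obtain ⟨i, ⟨hi1, hi2⟩, rfl⟩ := hx
    have h := abs_le.mp (hσ i)
    constructor
    · simp only
      omega
    · simp only
      omega
  · rintro x hx y hy hxy
    simp only [upairs, Finset.mem_image, mem_filter, mem_univ, true_and] at hx hy
    obtain ⟨i, ⟨hi1, hi2⟩, rfl⟩ := hx
    obtain ⟨i', ⟨hi1', hi2'⟩, rfl⟩ := hy
    simp only at hxy
    have : σ i = σ i' := by apply Fin.val_injective; omega
    have : i = i' := σ.injective this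
    subst this
    rfl
  · rintro x hx y hy hxy
    simp only [upairs, Finset.mem_image, mem_filter, mem_univ, true_and] at hx hy
    obtain ⟨i, ⟨hi1, hi2⟩, rfl⟩ := hx
    obtain ⟨i', ⟨hi1', hi2'⟩, rfl⟩ := hy
    simp only at hxy
    have : i = i' := by apply Fin.val_injective; omega
    subst this
    rfl

end Main3

section Build

variable {m t : ℕ} {R₁ R₂ : Finset (ℕ × ℕ)}

def buildFun (m : ℕ) (hm : 0 < m) (R₁ R₂ : Finset (ℕ × ℕ))
    (e₁ : {x // x ∈ fhf m R₂} ≃ {x // x ∈ fhf m R₁})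
    (e₂ : {x // x ∈ shf m R₁} ≃ {x // x ∈ shf m R₂}) : Fin (2*m) → Fin (2*m) := fun x =>
  if _ : (x:ℕ) < m then
    if h2 : x ∈ fhf m R₂ then (e₁ ⟨x, h2⟩).val
    else if h3 : (R₂.filter (fun p => p.2 = (x:ℕ)+1)).Nonempty then
      ⟨(m + ((R₂.filter (fun p => p.2 = (x:ℕ)+1)).image Prod.fst).min' (h3.image _)) % (2*m),
        Nat.mod_lt _ (by omega)⟩
    else x
  else
    if h2 : x ∈ shf m R₁ then (e₂ ⟨x, h2⟩).val
    else if h3 : (R₁.filter (fun p => p.1 = (x:ℕ)-m)).Nonempty then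
      ⟨((((R₁.filter (fun p => p.1 = (x:ℕ)-m)).image Prod.snd).min' (by exact h3.image _)) - 1) % (2*m),
        Nat.mod_lt _ (by omega)⟩
    else x

variable {hm : 0 < m} {e₁ : {x // x ∈ fhf m R₂} ≃ {x // x ∈ fhf m R₁}}
    {e₂ : {x // x ∈ shf m R₁} ≃ {x // x ∈ shf m R₂}}

lemma mem_fhf_iff {x : Fin (2*m)} {R : Finset (ℕ × ℕ)} :
    x ∈ fhf m R ↔ (x:ℕ) < m ∧ (x:ℕ)+1 ∉ R.image Prod.snd := by
  simp [fhf]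

lemma mem_shf_iff {x : Fin (2*m)} {R : Finset (ℕ × ℕ)} :
    x ∈ shf m R ↔ m ≤ (x:ℕ) ∧ (x:ℕ)-m ∉ R.image Prod.fst := by
  simp [shf]

lemma buildFun_fhf {x : Fin (2*m)} (h2 : x ∈ fhf m R₂) :
    buildFun m hm R₁ R₂ e₁ e₂ x = (e₁ ⟨x, h2⟩).val := by
  have h1 : (x:ℕ) < m := (mem_fhf_iff.mp h2).1
  rw [buildFun, dif_pos h1, dif_pos h2]

lemma buildFun_shf {x : Fin (2*m)} (h2 : x ∈ shf m R₁) :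
    buildFun m hm R₁ R₂ e₁ e₂ x = (e₂ ⟨x, h2⟩).val := by
  have h1 : ¬ (x:ℕ) < m := by have := (mem_shf_iff.mp h2).1; omega
  rw [buildFun, dif_neg h1, dif_pos h2]

lemma buildFun_up {x : Fin (2*m)} {a : ℕ × ℕ} (hR₂ : R₂ ∈ RookF (m+1) t)
    (ha : a ∈ R₂) (hax : a.2 = (x:ℕ)+1) :
    (buildFun m hm R₁ R₂ e₁ e₂ x : ℕ) = m + a.1 := by
  obtain ⟨hc, hb, hf, hs⟩ := mem_RookF.mp hR₂
  have hba := hb a ha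
  have h1 : (x:ℕ) < m := by omega
  have h2 : x ∉ fhf m R₂ := by
    rw [mem_fhf_iff]
    push_neg
    intro _
    exact Finset.mem_image.mpr ⟨a, ha, hax⟩
  have h3 : (R₂.filter (fun p => p.2 = (x:ℕ)+1)).Nonempty :=
    ⟨a, Finset.mem_filter.mpr ⟨ha, hax⟩⟩
  rw [buildFun, dif_pos h1, dif_neg h2, dif_pos h3]
  have hmem := Finset.min'_mem ((R₂.filter (fun p => p.2 = (x:ℕ)+1)).image Prod.fst) (h3.image _)
  simp only [Finset.mem_image, Finset.mem_filter] at hmem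
  obtain ⟨b, ⟨hbR, hb2⟩, hb1⟩ := hmem
  have hba' : b = a := hs _ hbR a ha (by rw [hb2, hax])
  subst hba'
  simp [← hb1]
  exact Nat.mod_eq_of_lt (by omega)

lemma buildFun_down {x : Fin (2*m)} {a : ℕ × ℕ} (hR₁ : R₁ ∈ RookF (m+1) t)
    (ha : a ∈ R₁) (hax : a.1 = (x:ℕ)-m) (hx : m ≤ (x:ℕ)) :
    (buildFun m hm R₁ R₂ e₁ e₂ x : ℕ) = a.2 - 1 := by
  obtain ⟨hc, hb, hf, hs⟩ := mem_RookF.mp hR₁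
  have hba := hb a ha
  have h1 : ¬ (x:ℕ) < m := by omega
  have h2 : x ∉ shf m R₁ := by
    rw [mem_shf_iff]
    push_neg
    intro _
    exact Finset.mem_image.mpr ⟨a, ha, hax⟩
  have h3 : (R₁.filter (fun p => p.1 = (x:ℕ)-m)).Nonempty :=
    ⟨a, Finset.mem_filter.mpr ⟨ha, hax⟩⟩
  rw [buildFun, dif_neg h1, dif_neg h2, dif_pos h3]
  have hmem := Finset.min'_mem ((R₁.filter (fun p => p.1 = (x:ℕ)-m)).image Prod.snd) (h3.image _)
  simp only [Finset.mem_image, Finset.mem_filter] at hmem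
  obtain ⟨b, ⟨hbR, hb1⟩, hb2⟩ := hmem
  have hba' : b = a := hf _ hbR a ha (by rw [hb1, hax])
  subst hba'
  simp [← hb2]
  exact Nat.mod_eq_of_lt (by omega)

end Build

section Build2

variable {m t : ℕ} {R₁ R₂ : Finset (ℕ × ℕ)} {hm : 0 < m}
    {e₁ : {x // x ∈ fhf m R₂} ≃ {x // x ∈ fhf m R₁}}
    {e₂ : {x // x ∈ shf m R₁} ≃ {x // x ∈ shf m R₂}}

lemma buildFun_surj (hR₁ : R₁ ∈ RookF (m+1) t) (hR₂ : R₂ ∈ RookF (m+1) t) :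
    Function.Surjective (buildFun m hm R₁ R₂ e₁ e₂) := by
  intro v
  by_cases hv1 : (v:ℕ) < m
  · by_cases hv2 : v ∈ fhf m R₁
    · refine ⟨(e₁.symm ⟨v, hv2⟩).val, ?_⟩
      rw [buildFun_fhf (e₁.symm ⟨v, hv2⟩).prop]
      simp
    · -- v is a value used by a down-crossing
      rw [mem_fhf_iff] at hv2
      push_neg at hv2
      obtain ⟨a, ha, ha2⟩ := Finset.mem_image.mp (hv2 hv1)
      have hba := (mem_RookF.mp hR₁).2.1 a ha
      refine ⟨⟨m + a.1, by omega⟩, ?_⟩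
      apply Fin.val_injective
      rw [buildFun_down (hm := hm) (e₁ := e₁) (e₂ := e₂) hR₁ ha (by simp) (by simp)]
      omega
  · by_cases hv2 : v ∈ shf m R₂
    · refine ⟨(e₂.symm ⟨v, hv2⟩).val, ?_⟩
      rw [buildFun_shf (e₂.symm ⟨v, hv2⟩).prop]
      simp
    · rw [mem_shf_iff] at hv2
      push_neg at hv2
      obtain ⟨a, ha, ha1⟩ := Finset.mem_image.mp (hv2 (by omega))
      have hba := (mem_RookF.mp hR₂).2.1 a ha
      refine ⟨⟨a.2 - 1, by omega⟩, ?_⟩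
      apply Fin.val_injective
      rw [buildFun_up (hm := hm) (e₁ := e₁) (e₂ := e₂) hR₂ ha (by simp; omega)]
      omega

noncomputable def buildPerm (hm : 0 < m) (hR₁ : R₁ ∈ RookF (m+1) t) (hR₂ : R₂ ∈ RookF (m+1) t)
    (e₁ : {x // x ∈ fhf m R₂} ≃ {x // x ∈ fhf m R₁})
    (e₂ : {x // x ∈ shf m R₁} ≃ {x // x ∈ shf m R₂}) : Equiv.Perm (Fin (2*m)) :=
  Equiv.ofBijective (buildFun m hm R₁ R₂ e₁ e₂)
    ((Finite.surjective_iff_bijective).mp (buildFun_surj hR₁ hR₂))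

lemma buildPerm_apply (hR₁ : R₁ ∈ RookF (m+1) t) (hR₂ : R₂ ∈ RookF (m+1) t) (x : Fin (2*m)) :
    buildPerm hm hR₁ hR₂ e₁ e₂ x = buildFun m hm R₁ R₂ e₁ e₂ x := rfl

end Build2

section Restr

variable {m t : ℕ} {R₁ R₂ : Finset (ℕ × ℕ)}

lemma restr_mem₁ (σ : Equiv.Perm (Fin (2*m))) (hdp : dpairs m σ = R₁) (hup : upairs m σ = R₂)
    {x : Fin (2*m)} (hx : x ∈ fhf m R₂) : σ x ∈ fhf m R₁ := by
  rw [mem_fhf_iff] at hx ⊢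
  obtain ⟨hx1, hx2⟩ := hx
  have hσx : (σ x : ℕ) < m := by
    by_contra hge
    push_neg at hge
    apply hx2
    rw [← hup]
    have hxmem : x ∈ univ.filter (fun i : Fin (2*m) => (i:ℕ) < m ∧ m ≤ (σ i : ℕ)) :=
      Finset.mem_filter.mpr ⟨Finset.mem_univ _, hx1, hge⟩
    exact Finset.mem_image.mpr ⟨_, Finset.mem_image_of_mem _ hxmem, rfl⟩
  refine ⟨hσx, ?_⟩
  intro hmem
  rw [← hdp] at hmem
  obtain ⟨p, hp, hp2⟩ := Finset.mem_image.mp hmem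
  obtain ⟨j, hj, rfl⟩ := Finset.mem_image.mp hp
  simp only [Finset.mem_filter, Finset.mem_univ, true_and] at hj
  simp only at hp2
  have : σ j = σ x := by apply Fin.val_injective; omega
  have : j = x := σ.injective this
  omega

lemma restr_mem₂ (σ : Equiv.Perm (Fin (2*m))) (hdp : dpairs m σ = R₁) (hup : upairs m σ = R₂)
    {x : Fin (2*m)} (hx : x ∈ shf m R₁) : σ x ∈ shf m R₂ := by
  rw [mem_shf_iff] at hx ⊢
  obtain ⟨hx1, hx2⟩ := hx
  have hσx : m ≤ (σ x : ℕ) := by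
    by_contra hlt
    push_neg at hlt
    apply hx2
    rw [← hdp]
    have hxmem : x ∈ univ.filter (fun j : Fin (2*m) => m ≤ (j:ℕ) ∧ (σ j : ℕ) < m) :=
      Finset.mem_filter.mpr ⟨Finset.mem_univ _, hx1, hlt⟩
    exact Finset.mem_image.mpr ⟨_, Finset.mem_image_of_mem _ hxmem, rfl⟩
  refine ⟨hσx, ?_⟩
  intro hmem
  rw [← hup] at hmem
  obtain ⟨p, hp, hp1⟩ := Finset.mem_image.mp hmem
  obtain ⟨i, hi, rfl⟩ := Finset.mem_image.mp hp
  simp only [Finset.mem_filter, Finset.mem_univ, true_and] at hi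
  simp only at hp1
  have : σ i = σ x := by apply Fin.val_injective; omega
  have : i = x := σ.injective this
  omega

end Restr

section BuildMem

variable {m t : ℕ} {R₁ R₂ : Finset (ℕ × ℕ)} {hm : 0 < m}
    {e₁ : {x // x ∈ fhf m R₂} ≃ {x // x ∈ fhf m R₁}}
    {e₂ : {x // x ∈ shf m R₁} ≃ {x // x ∈ shf m R₂}}

lemma buildPerm_constraint (hR₁ : R₁ ∈ RookF (m+1) t) (hR₂ : R₂ ∈ RookF (m+1) t)
    (x : Fin (2*m)) :
    |((x : ℕ) : ℤ) - ((buildPerm hm hR₁ hR₂ e₁ e₂ x : Fin (2*m)) : ℤ)| ≤ (m : ℤ) := by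
  rw [abs_le]
  by_cases h1 : (x:ℕ) < m
  · by_cases h2 : x ∈ fhf m R₂
    · have := (mem_fhf_iff.mp (e₁ ⟨x, h2⟩).prop).1
      rw [buildPerm_apply, buildFun_fhf h2]
      constructor <;> push_cast <;> omega
    · rw [mem_fhf_iff] at h2
      push_neg at h2
      obtain ⟨a, ha, ha2⟩ := Finset.mem_image.mp (h2 h1)
      have hba := (mem_RookF.mp hR₂).2.1 a ha
      have := buildFun_up (hm := hm) (e₁ := e₁) (e₂ := e₂) hR₂ ha ha2
      rw [buildPerm_apply, this]
      constructor <;> push_cast <;> omega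
  · by_cases h2 : x ∈ shf m R₁
    · have h3 := (mem_shf_iff.mp (e₂ ⟨x, h2⟩).prop).1
      have h4 := ((e₂ ⟨x, h2⟩) : Fin (2*m)).isLt
      rw [buildPerm_apply, buildFun_shf h2]
      constructor <;> push_cast <;> omega
    · rw [mem_shf_iff] at h2
      push_neg at h2
      obtain ⟨a, ha, ha1⟩ := Finset.mem_image.mp (h2 (by omega))
      have hba := (mem_RookF.mp hR₁).2.1 a ha
      have := buildFun_down (hm := hm) (e₁ := e₁) (e₂ := e₂) hR₁ ha ha1 (by omega)
      rw [buildPerm_apply, this]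
      constructor <;> push_cast <;> omega

lemma buildPerm_dpairs (hR₁ : R₁ ∈ RookF (m+1) t) (hR₂ : R₂ ∈ RookF (m+1) t) :
    dpairs m (buildPerm hm hR₁ hR₂ e₁ e₂) = R₁ := by
  obtain ⟨hc, hb, hf, hs⟩ := mem_RookF.mp hR₁
  ext a
  simp only [dpairs, Finset.mem_image, Finset.mem_filter, Finset.mem_univ, true_and]
  constructor
  · rintro ⟨j, ⟨hj1, hj2⟩, rfl⟩
    have h2 : j ∉ shf m R₁ := by
      intro h2
      have := (mem_shf_iff.mp ((e₂ ⟨j, h2⟩).prop)).1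
      rw [buildPerm_apply, buildFun_shf h2] at hj2
      omega
    rw [mem_shf_iff] at h2
    push_neg at h2
    obtain ⟨b, hb', hb1⟩ := Finset.mem_image.mp (h2 hj1)
    have hbb := hb b hb'
    have heval := buildFun_down (hm := hm) (e₁ := e₁) (e₂ := e₂) hR₁ hb' hb1 hj1
    rw [buildPerm_apply] at *
    rw [heval]
    have : ((j:ℕ) - m, b.2 - 1 + 1) = b := by
      rw [Prod.ext_iff]
      constructor
      · simp only
        omega
      · simp only
        omega
    rw [this]
    exact hb'
  · intro ha
    have hba := hb a ha
    refine ⟨⟨m + a.1, by omega⟩, ⟨?_, ?_⟩, ?_⟩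
    · simp only
      omega
    · rw [buildPerm_apply, buildFun_down (hm := hm) (e₁ := e₁) (e₂ := e₂) hR₁ ha (by simp) (by simp)]
      omega
    · rw [buildPerm_apply, buildFun_down (hm := hm) (e₁ := e₁) (e₂ := e₂) hR₁ ha (by simp) (by simp)]
      rw [Prod.ext_iff]
      constructor
      · simp only
        omega
      · simp only
        omega

lemma buildPerm_upairs (hR₁ : R₁ ∈ RookF (m+1) t) (hR₂ : R₂ ∈ RookF (m+1) t) :
    upairs m (buildPerm hm hR₁ hR₂ e₁ e₂) = R₂ := by
  obtain ⟨hc, hb, hf, hs⟩ := mem_RookF.mp hR₂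
  ext a
  simp only [upairs, Finset.mem_image, Finset.mem_filter, Finset.mem_univ, true_and]
  constructor
  · rintro ⟨i, ⟨hi1, hi2⟩, rfl⟩
    have h2 : i ∉ fhf m R₂ := by
      intro h2
      have := (mem_fhf_iff.mp ((e₁ ⟨i, h2⟩).prop)).1
      rw [buildPerm_apply, buildFun_fhf h2] at hi2
      omega
    rw [mem_fhf_iff] at h2
    push_neg at h2
    obtain ⟨b, hb', hb2⟩ := Finset.mem_image.mp (h2 hi1)
    have hbb := hb b hb'
    have heval := buildFun_up (hm := hm) (e₁ := e₁) (e₂ := e₂) hR₂ hb' hb2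
    rw [buildPerm_apply] at *
    rw [heval]
    have : (m + b.1 - m, (i:ℕ) + 1) = b := by
      rw [Prod.ext_iff]
      constructor
      · simp only
        omega
      · simp only
        omega
    rw [this]
    exact hb'
  · intro ha
    have hba := hb a ha
    refine ⟨⟨a.2 - 1, by omega⟩, ⟨?_, ?_⟩, ?_⟩
    · simp only
      omega
    · rw [buildPerm_apply, buildFun_up (hm := hm) (e₁ := e₁) (e₂ := e₂) hR₂ ha (by simp; omega)]
      omega
    · rw [buildPerm_apply, buildFun_up (hm := hm) (e₁ := e₁) (e₂ := e₂) hR₂ ha (by simp; omega)]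
      rw [Prod.ext_iff]
      constructor
      · simp only
        omega
      · simp only
        omega

end BuildMem

section Fiber

variable {m t : ℕ} {R₁ R₂ : Finset (ℕ × ℕ)}

noncomputable def mkE₁ (σ : Equiv.Perm (Fin (2*m))) (hdp : dpairs m σ = R₁)
    (hup : upairs m σ = R₂) (hcard : (fhf m R₂).card = (fhf m R₁).card) :
    {x // x ∈ fhf m R₂} ≃ {x // x ∈ fhf m R₁} :=
  Equiv.ofBijective (fun y => ⟨σ y, restr_mem₁ σ hdp hup y.prop⟩)
    ((Fintype.bijective_iff_injective_and_card _).mpr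
      ⟨fun a b hab => Subtype.ext (σ.injective (congrArg Subtype.val hab)), by
        rw [Fintype.card_coe, Fintype.card_coe, hcard]⟩)

noncomputable def mkE₂ (σ : Equiv.Perm (Fin (2*m))) (hdp : dpairs m σ = R₁)
    (hup : upairs m σ = R₂) (hcard : (shf m R₁).card = (shf m R₂).card) :
    {x // x ∈ shf m R₁} ≃ {x // x ∈ shf m R₂} :=
  Equiv.ofBijective (fun y => ⟨σ y, restr_mem₂ σ hdp hup y.prop⟩)
    ((Fintype.bijective_iff_injective_and_card _).mpr
      ⟨fun a b hab => Subtype.ext (σ.injective (congrArg Subtype.val hab)), by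
        rw [Fintype.card_coe, Fintype.card_coe, hcard]⟩)

@[simp] lemma mkE₁_apply (σ : Equiv.Perm (Fin (2*m))) (hdp : dpairs m σ = R₁)
    (hup : upairs m σ = R₂) (hcard : (fhf m R₂).card = (fhf m R₁).card)
    (y : {x // x ∈ fhf m R₂}) : (mkE₁ σ hdp hup hcard y : Fin (2*m)) = σ y := rfl

@[simp] lemma mkE₂_apply (σ : Equiv.Perm (Fin (2*m))) (hdp : dpairs m σ = R₁)
    (hup : upairs m σ = R₂) (hcard : (shf m R₁).card = (shf m R₂).card)
    (y : {x // x ∈ shf m R₁}) : (mkE₂ σ hdp hup hcard y : Fin (2*m)) = σ y := rfl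

lemma fiber_card (hm2 : 2 ≤ m) (ht : t ≤ m) (hR₁ : R₁ ∈ RookF (m+1) t)
    (hR₂ : R₂ ∈ RookF (m+1) t) :
    ((univ.filter (fun σ : Equiv.Perm (Fin (2 * m)) =>
        (∀ i : Fin (2 * m), |((i : ℕ) : ℤ) - ((σ i : ℕ) : ℤ)| ≤ (m : ℤ)) ∧
        (Finset.univ.filter
          (fun j : Fin (2 * m) => m ≤ (j : ℕ) ∧ (σ j : ℕ) < m)).card = t)).filter
      (fun σ => (dpairs m σ, upairs m σ) = (R₁, R₂))).card
      = (m-t).factorial * (m-t).factorial := by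
  have hm : 0 < m := by omega
  have hcard1 : (fhf m R₂).card = (fhf m R₁).card := by
    rw [card_fhf R₂ hR₂ (by omega), card_fhf R₁ hR₁ (by omega)]
  have hcard2 : (shf m R₁).card = (shf m R₂).card := by
    rw [card_shf R₁ hR₁ (by omega), card_shf R₂ hR₂ (by omega)]
  have hfib : ∀ σ ∈ ((univ.filter (fun σ : Equiv.Perm (Fin (2 * m)) =>
        (∀ i : Fin (2 * m), |((i : ℕ) : ℤ) - ((σ i : ℕ) : ℤ)| ≤ (m : ℤ)) ∧
        (Finset.univ.filter
          (fun j : Fin (2 * m) => m ≤ (j : ℕ) ∧ (σ j : ℕ) < m)).card = t)).filter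
      (fun σ => (dpairs m σ, upairs m σ) = (R₁, R₂))),
      dpairs m σ = R₁ ∧ upairs m σ = R₂ := by
    intro σ hσ
    have h := (Finset.mem_filter.mp hσ).2
    exact ⟨congrArg Prod.fst h, congrArg Prod.snd h⟩
  have key := Finset.card_bij'
    (i := fun σ hσ => ((mkE₁ σ (hfib σ hσ).1 (hfib σ hσ).2 hcard1,
        mkE₂ σ (hfib σ hσ).1 (hfib σ hσ).2 hcard2) :
        ({x // x ∈ fhf m R₂} ≃ {x // x ∈ fhf m R₁}) ×
        ({x // x ∈ shf m R₁} ≃ {x // x ∈ shf m R₂})))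
    (j := fun p _ => buildPerm hm hR₁ hR₂ p.1 p.2)
    (hi := fun _ _ => Finset.mem_univ _)
    (hj := ?_) (left_inv := ?_) (right_inv := ?_)
  · rw [key, Finset.card_univ, Fintype.card_prod, Fintype.card_equiv
      (Fintype.equivOfCardEq (by rw [Fintype.card_coe, Fintype.card_coe, hcard1])),
      Fintype.card_equiv (Fintype.equivOfCardEq (by rw [Fintype.card_coe, Fintype.card_coe, hcard2])),
      Fintype.card_coe, Fintype.card_coe, card_fhf R₂ hR₂ (by omega), card_shf R₁ hR₁ (by omega)]
  · -- hj : buildPerm lands in the fiber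
    intro p _
    rw [Finset.mem_filter, Finset.mem_filter]
    refine ⟨⟨Finset.mem_univ _, ?_, ?_⟩, ?_⟩
    · exact buildPerm_constraint hR₁ hR₂
    · have h1 := buildPerm_dpairs (hm := hm) (e₁ := p.1) (e₂ := p.2) hR₁ hR₂
      have h2 := card_dpairs (buildPerm hm hR₁ hR₂ p.1 p.2)
      rw [h1] at h2
      rw [← h2, (mem_RookF.mp hR₁).1]
    · rw [buildPerm_dpairs hR₁ hR₂, buildPerm_upairs hR₁ hR₂]
  · -- left inverse : buildPerm of restriction equivs is σ
    intro σ hσ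
    obtain ⟨hdp, hup⟩ := hfib σ hσ
    beta_reduce
    apply Equiv.ext
    intro x
    rw [buildPerm_apply]
    by_cases h1 : (x:ℕ) < m
    · by_cases h2 : x ∈ fhf m R₂
      · rw [buildFun_fhf h2]
        rfl
      · rw [mem_fhf_iff] at h2
        push_neg at h2
        obtain ⟨b, hb', hb2⟩ := Finset.mem_image.mp (h2 h1)
        have hb'' := hb'
        rw [← hup] at hb''
        obtain ⟨i, hi, hbi⟩ := Finset.mem_image.mp hb''
        simp only [Finset.mem_filter, Finset.mem_univ, true_and] at hi
        have hfst := congrArg Prod.fst hbi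
        have hsnd := congrArg Prod.snd hbi
        simp only at hfst hsnd
        have hix : i = x := by apply Fin.val_injective; omega
        subst hix
        apply Fin.val_injective
        rw [buildFun_up (hm := hm) (e₁ := mkE₁ σ hdp hup hcard1)
          (e₂ := mkE₂ σ hdp hup hcard2) hR₂ hb' hb2]
        omega
    · by_cases h2 : x ∈ shf m R₁
      · rw [buildFun_shf h2]
        rfl
      · rw [mem_shf_iff] at h2
        push_neg at h2
        obtain ⟨b, hb', hb1⟩ := Finset.mem_image.mp (h2 (by omega))
        have hb'' := hb'
        rw [← hdp] at hb''
        obtain ⟨j, hj, hbj⟩ := Finset.mem_image.mp hb''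
        simp only [Finset.mem_filter, Finset.mem_univ, true_and] at hj
        have hfst := congrArg Prod.fst hbj
        have hsnd := congrArg Prod.snd hbj
        simp only at hfst hsnd
        have hjx : j = x := by apply Fin.val_injective; omega
        subst hjx
        apply Fin.val_injective
        rw [buildFun_down (hm := hm) (e₁ := mkE₁ σ hdp hup hcard1)
          (e₂ := mkE₂ σ hdp hup hcard2) hR₁ hb' hb1 (by omega)]
        omega
  · -- right inverse
    intro p _
    beta_reduce
    refine Prod.ext ?_ ?_
    · apply Equiv.ext
      intro y
      apply Subtype.ext
      simp only [mkE₁_apply, buildPerm_apply]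
      rw [buildFun_fhf y.prop]
    · apply Equiv.ext
      intro y
      apply Subtype.ext
      simp only [mkE₂_apply, buildPerm_apply]
      rw [buildFun_shf y.prop]

end Fiber

theorem stmt3 (m : ℕ) (hm : 2 ≤ m) (t : ℕ) (ht : t ≤ m) :
    (Finset.univ.filter (fun σ : Equiv.Perm (Fin (2 * m)) =>
        (∀ i : Fin (2 * m), |((i : ℕ) : ℤ) - ((σ i : ℕ) : ℤ)| ≤ (m : ℤ)) ∧
        (Finset.univ.filter
          (fun j : Fin (2 * m) => m ≤ (j : ℕ) ∧ (σ j : ℕ) < m)).card = t)).card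
      = ((m - t).factorial * stirling (m + 1) (m - t + 1)) ^ 2 := by
  have key := Finset.card_eq_sum_card_fiberwise
    (s := Finset.univ.filter (fun σ : Equiv.Perm (Fin (2 * m)) =>
        (∀ i : Fin (2 * m), |((i : ℕ) : ℤ) - ((σ i : ℕ) : ℤ)| ≤ (m : ℤ)) ∧
        (Finset.univ.filter
          (fun j : Fin (2 * m) => m ≤ (j : ℕ) ∧ (σ j : ℕ) < m)).card = t))
    (t := RookF (m+1) t ×ˢ RookF (m+1) t)
    (f := fun σ => (dpairs m σ, upairs m σ))
    (fun σ hσ => by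
      rw [Finset.mem_coe, Finset.mem_filter] at hσ
      exact Finset.mem_product.mpr ⟨dpairs_mem σ hσ.2.1 hσ.2.2, upairs_mem σ hσ.2.1 hσ.2.2⟩)
  rw [key, Finset.sum_const_nat (m := (m-t).factorial * (m-t).factorial)
    (fun p hp => by
      rw [Finset.mem_product] at hp
      exact fiber_card hm ht hp.1 hp.2),
    Finset.card_product, rook_card m t, show m + 1 - t = (m - t) + 1 from by omega]
  ring
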